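/- Let a, b ∈ ℝ with a ≠ 0 and a² + b² = 1, and define f : ℝ × (0, π) → ℝ³ by f(ζ, ξ) = ( a cos ζ sin ξ, a sin ζ sin ξ, a (cos ξ + log (tan (ξ/2))) + b ζ ). Then for every (ζ, ξ) ∈ ℝ × (0, π), the cross product f_ζ(ζ, ξ) × f_ξ(ζ, ξ) equals 0 if and only if cos ξ = 0 (i.e. ξ = π/2). In other words, the singular set of Dini's surface is exactly the helix {ξ = π/2}. -/

import Mathlib

open Matrix

noncomputable section

/-- Partial derivative in the first (`ζ`) direction. -/
def pd1 (g : ℝ × ℝ → Fin 3 → ℝ) (p : ℝ × ℝ) : Fin 3 → ℝ := fderiv ℝ g p (1, 0)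

/-- Partial derivative in the second (`ξ`) direction. -/
def pd2 (g : ℝ × ℝ → Fin 3 → ℝ) (p : ℝ × ℝ) : Fin 3 → ℝ := fderiv ℝ g p (0, 1)

/-- Dini's surface `f(ζ, ξ) = (a cos ζ sin ξ, a sin ζ sin ξ,
a (cos ξ + log tan (ξ/2)) + b ζ)`. -/
def dini (a b : ℝ) : ℝ × ℝ → Fin 3 → ℝ := fun p =>
  ![a * Real.cos p.1 * Real.sin p.2,
    a * Real.sin p.1 * Real.sin p.2,
    a * (Real.cos p.2 + Real.log (Real.tan (p.2 / 2))) + b * p.1]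

lemma hasDerivAt_log_tan_half {x : ℝ} (hx : x ∈ Set.Ioo 0 Real.pi) :
    HasDerivAt (fun t => Real.log (Real.tan (t / 2))) (1 / Real.sin x) x := by
  obtain ⟨hx0, hxpi⟩ := hx
  have hh0 : 0 < x / 2 := by linarith
  have hh1 : x / 2 < Real.pi / 2 := by linarith
  have hcos : 0 < Real.cos (x / 2) :=
    Real.cos_pos_of_mem_Ioo ⟨by linarith [Real.pi_pos], hh1⟩
  have hsin : 0 < Real.sin (x / 2) := Real.sin_pos_of_pos_of_lt_pi hh0 (by linarith [Real.pi_pos])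
  have htan : 0 < Real.tan (x / 2) := Real.tan_pos_of_pos_of_lt_pi_div_two hh0 hh1
  have h1 : HasDerivAt (fun t : ℝ => t / 2) (1 / 2) x := by
    simpa using (hasDerivAt_id x).div_const 2
  have h2 : HasDerivAt Real.tan (1 / Real.cos (x / 2) ^ 2) (x / 2) :=
    Real.hasDerivAt_tan hcos.ne'
  have h3 : HasDerivAt (fun t => Real.tan (t / 2)) (1 / Real.cos (x / 2) ^ 2 * (1 / 2)) x :=
    HasDerivAt.comp (h := fun t : ℝ => t / 2) x h2 h1
  have h4 := h3.log htan.ne'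
  have hsx : Real.sin x = 2 * Real.sin (x / 2) * Real.cos (x / 2) := by
    rw [show x = 2 * (x / 2) by ring, Real.sin_two_mul]
    ring_nf
  have : 1 / Real.cos (x / 2) ^ 2 * (1 / 2) / Real.tan (x / 2) = 1 / Real.sin x := by
    rw [Real.tan_eq_sin_div_cos, hsx]
    field_simp
  rwa [this] at h4

set_option maxHeartbeats 1000000 in
/-- for `a ≠ 0`, `a² + b² = 1`, the singular set of Dini's surface on
`ℝ × (0, π)` is exactly `{cos ξ = 0}`, i.e. the helix `{ξ = π/2}`. -/
theorem statement17 (a b : ℝ) (ha : a ≠ 0) (hab : a ^ 2 + b ^ 2 = 1)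
    (f : ℝ × ℝ → Fin 3 → ℝ) (hf : f = dini a b) :
    ∀ p : ℝ × ℝ, p.2 ∈ Set.Ioo 0 Real.pi →
      ((pd1 f p ⨯₃ pd2 f p) = 0 ↔ Real.cos p.2 = 0) ∧
      (Real.cos p.2 = 0 ↔ p.2 = Real.pi / 2) := by
  intro p hp
  obtain ⟨hp0, hppi⟩ := hp
  have hsin : 0 < Real.sin p.2 := Real.sin_pos_of_pos_of_lt_pi hp0 hppi
  -- derivatives of basic pieces
  have hcos1 : HasFDerivAt (fun x : ℝ × ℝ => Real.cos x.1)
      ((-Real.sin p.1) • ContinuousLinearMap.fst ℝ ℝ ℝ) p :=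
    (Real.hasDerivAt_cos p.1).comp_hasFDerivAt p hasFDerivAt_fst
  have hsin1 : HasFDerivAt (fun x : ℝ × ℝ => Real.sin x.1)
      ((Real.cos p.1) • ContinuousLinearMap.fst ℝ ℝ ℝ) p :=
    (Real.hasDerivAt_sin p.1).comp_hasFDerivAt p hasFDerivAt_fst
  have hcos2 : HasFDerivAt (fun x : ℝ × ℝ => Real.cos x.2)
      ((-Real.sin p.2) • ContinuousLinearMap.snd ℝ ℝ ℝ) p :=
    (Real.hasDerivAt_cos p.2).comp_hasFDerivAt p hasFDerivAt_snd
  have hsin2 : HasFDerivAt (fun x : ℝ × ℝ => Real.sin x.2)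
      ((Real.cos p.2) • ContinuousLinearMap.snd ℝ ℝ ℝ) p :=
    (Real.hasDerivAt_sin p.2).comp_hasFDerivAt p hasFDerivAt_snd
  have hlog2 : HasFDerivAt (fun x : ℝ × ℝ => Real.log (Real.tan (x.2 / 2)))
      ((1 / Real.sin p.2) • ContinuousLinearMap.snd ℝ ℝ ℝ) p :=
    (hasDerivAt_log_tan_half ⟨hp0, hppi⟩).comp_hasFDerivAt p hasFDerivAt_snd
  -- component derivatives, in cleaned-up form
  have h0 : HasFDerivAt (fun x : ℝ × ℝ => a * Real.cos x.1 * Real.sin x.2)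
      ((-(a * Real.sin p.1 * Real.sin p.2)) • ContinuousLinearMap.fst ℝ ℝ ℝ +
        (a * Real.cos p.1 * Real.cos p.2) • ContinuousLinearMap.snd ℝ ℝ ℝ) p := by
    have := (hcos1.const_mul a).mul hsin2
    refine this.congr_fderiv ?_
    ext x <;> simp <;> ring
  have h1 : HasFDerivAt (fun x : ℝ × ℝ => a * Real.sin x.1 * Real.sin x.2)
      ((a * Real.cos p.1 * Real.sin p.2) • ContinuousLinearMap.fst ℝ ℝ ℝ +
        (a * Real.sin p.1 * Real.cos p.2) • ContinuousLinearMap.snd ℝ ℝ ℝ) p := by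
    have := (hsin1.const_mul a).mul hsin2
    refine this.congr_fderiv ?_
    ext x <;> simp <;> ring
  have h2 : HasFDerivAt
      (fun x : ℝ × ℝ => a * (Real.cos x.2 + Real.log (Real.tan (x.2 / 2))) + b * x.1)
      (b • ContinuousLinearMap.fst ℝ ℝ ℝ +
        (a * (Real.cos p.2 ^ 2 / Real.sin p.2)) • ContinuousLinearMap.snd ℝ ℝ ℝ) p := by
    have := ((hcos2.add hlog2).const_mul a).add (hasFDerivAt_fst.const_mul b)
    refine this.congr_fderiv ?_
    have hpy := Real.sin_sq_add_cos_sq p.2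
    ext x <;> simp <;> field_simp <;> linear_combination (-1) * hpy
  -- full derivative
  have hF : HasFDerivAt f (ContinuousLinearMap.pi
      ![(-(a * Real.sin p.1 * Real.sin p.2)) • ContinuousLinearMap.fst ℝ ℝ ℝ +
          (a * Real.cos p.1 * Real.cos p.2) • ContinuousLinearMap.snd ℝ ℝ ℝ,
        (a * Real.cos p.1 * Real.sin p.2) • ContinuousLinearMap.fst ℝ ℝ ℝ +
          (a * Real.sin p.1 * Real.cos p.2) • ContinuousLinearMap.snd ℝ ℝ ℝ,
        b • ContinuousLinearMap.fst ℝ ℝ ℝ +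
          (a * (Real.cos p.2 ^ 2 / Real.sin p.2)) • ContinuousLinearMap.snd ℝ ℝ ℝ]) p := by
    rw [hf]
    apply hasFDerivAt_pi'.2
    intro i
    fin_cases i
    · simp only [ContinuousLinearMap.proj_pi, Matrix.cons_val_zero]
      simpa [dini] using h0
    · simp only [ContinuousLinearMap.proj_pi, Matrix.cons_val_one, Matrix.head_cons]
      simpa [dini] using h1
    · simp only [ContinuousLinearMap.proj_pi, Matrix.cons_val_two, Matrix.tail_cons,
        Matrix.head_cons]
      simpa [dini] using h2
  have hu : pd1 f p = ![-(a * Real.sin p.1 * Real.sin p.2),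
      a * Real.cos p.1 * Real.sin p.2, b] := by
    rw [pd1, hF.fderiv]
    funext i
    fin_cases i <;> simp
  have hv : pd2 f p = ![a * Real.cos p.1 * Real.cos p.2,
      a * Real.sin p.1 * Real.cos p.2, a * (Real.cos p.2 ^ 2 / Real.sin p.2)] := by
    rw [pd2, hF.fderiv]
    funext i
    fin_cases i <;> simp
  rw [hu, hv, cross_apply]
  constructor
  · constructor
    · intro h
      have h2' := congrFun h 2
      simp at h2'
      have hpy := Real.sin_sq_add_cos_sq p.1
      have hz : a ^ 2 * Real.sin p.2 * Real.cos p.2 = 0 := by nlinarith [h2']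
      rcases mul_eq_zero.1 hz with h' | h'
      · rcases mul_eq_zero.1 h' with h'' | h''
        · exact absurd h'' (pow_ne_zero 2 ha)
        · exact absurd h'' hsin.ne'
      · exact h'
    · intro h
      funext i
      fin_cases i <;> simp [h]
  · constructor
    · intro h
      exact Real.injOn_cos ⟨hp0.le, hppi.le⟩
        ⟨by positivity, by linarith [Real.pi_pos]⟩ (by rw [Real.cos_pi_div_two, h])
    · intro h
      rw [h, Real.cos_pi_div_two]
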